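/- Let n ≥ 2 and let p ∈ [0,1)^n sum to an integer k with 1 ≤ k ≤ n−1, with p_1 > 0. Setting s := ∑_{i=1}^{k}(1 − p_i), it holds that ∑_{A⊆{2,…,n−1}, |A|=k−1} ∏_{i∈A} p_i ∏_{i∈{2,…,n−1}∖A} (1−p_i) ≥ (1 − 2s) / (p_1 (1 − p_n)). (In probabilistic terms: P[|B̂| = k−1] ≥ (1−2s)/(p_1(1−p_n)), where B̂ is the Poisson trial on {2,…,n−1}.) -/

import Mathlib

open Finset


private lemma sum_w_eq_one {n : ℕ} (p : Fin n → ℝ) (s : Finset (Fin n)) :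
    ∑ A ∈ s.powerset, (∏ i ∈ A, p i) * ∏ i ∈ s \ A, (1 - p i) = 1 := by
  rw [← Finset.prod_add]
  have h : ∀ i ∈ s, p i + (1 - p i) = 1 := by intro i _; ring
  rw [Finset.prod_congr rfl h, Finset.prod_const_one]

private lemma sum_w_notMem {n : ℕ} (p : Fin n → ℝ) (j : Fin n) :
    ∑ A ∈ (univ : Finset (Fin n)).powerset.filter (fun A => j ∉ A),
      (∏ i ∈ A, p i) * ∏ i ∈ univ \ A, (1 - p i) = 1 - p j := by
  have hset : (univ : Finset (Fin n)).powerset.filter (fun A => j ∉ A)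
      = (univ.erase j).powerset := by
    ext A
    simp [Finset.subset_erase]
  rw [hset]
  have h : ∀ A ∈ (univ.erase j).powerset,
      (∏ i ∈ A, p i) * ∏ i ∈ univ \ A, (1 - p i)
        = (1 - p j) * ((∏ i ∈ A, p i) * ∏ i ∈ (univ.erase j) \ A, (1 - p i)) := by
    intro A hA
    rw [Finset.mem_powerset, Finset.subset_erase] at hA
    have huniv : (univ : Finset (Fin n)) \ A = insert j ((univ.erase j) \ A) := by
      ext i
      by_cases hij : i = j
      · subst hij; simp [hA.2]
      · simp [hij]
    rw [huniv, Finset.prod_insert (by simp)]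
    ring
  rw [Finset.sum_congr rfl h, ← Finset.mul_sum, sum_w_eq_one, mul_one]

private lemma sum_w_mem {n : ℕ} (p : Fin n → ℝ) (j : Fin n) :
    ∑ A ∈ (univ : Finset (Fin n)).powerset.filter (fun A => j ∈ A),
      (∏ i ∈ A, p i) * ∏ i ∈ univ \ A, (1 - p i) = p j := by
  have h := Finset.sum_filter_add_sum_filter_not (univ : Finset (Fin n)).powerset
    (fun A => j ∈ A) (fun A => (∏ i ∈ A, p i) * ∏ i ∈ univ \ A, (1 - p i))
  have h2 : (univ : Finset (Fin n)).powerset.filter (fun A => ¬ j ∈ A)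
      = (univ : Finset (Fin n)).powerset.filter (fun A => j ∉ A) := rfl
  rw [h2, sum_w_notMem, sum_w_eq_one] at h
  linarith

private lemma sum_le_cover {α β : Type*} (s : Finset α) (I : Finset β)
    (f : α → ℝ) (hf : ∀ a ∈ s, 0 ≤ f a) (R : β → α → Prop) [∀ i a, Decidable (R i a)]
    (hcover : ∀ a ∈ s, ∃ i ∈ I, R i a) :
    ∑ a ∈ s, f a ≤ ∑ i ∈ I, ∑ a ∈ s.filter (fun a => R i a), f a := by
  have h1 : ∑ a ∈ s, f a ≤ ∑ a ∈ s, ∑ i ∈ I.filter (fun i => R i a), f a := by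
    refine Finset.sum_le_sum fun a ha => ?_
    obtain ⟨i, hi, hR⟩ := hcover a ha
    have hpos : 0 < (I.filter (fun i => R i a)).card :=
      Finset.card_pos.mpr ⟨i, Finset.mem_filter.mpr ⟨hi, hR⟩⟩
    rw [Finset.sum_const, nsmul_eq_mul]
    exact le_mul_of_one_le_left (hf a ha) (by exact_mod_cast hpos)
  refine h1.trans (le_of_eq ?_)
  have h2 : ∀ a ∈ s, ∑ i ∈ I.filter (fun i => R i a), f a
      = ∑ i ∈ I, if R i a then f a else 0 := by
    intro a _
    rw [Finset.sum_filter]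
  rw [Finset.sum_congr rfl h2, Finset.sum_comm]
  refine Finset.sum_congr rfl fun i _ => ?_
  rw [Finset.sum_filter]

/-- `P[|B̂| = k−1] ≥ (1−2s)/(p_1(1−p_n))`, where `B̂` is the Poisson trial on
`{2,…,n−1}` and `s := ∑_{i=1}^{k}(1 − p_i)`. -/
theorem poisson_trial_prob_bound {n k : ℕ} (hn : 2 ≤ n) (hk1 : 1 ≤ k) (hkn : k ≤ n - 1)
    (p : Fin n → ℝ) (hp : ∀ i, 0 ≤ p i ∧ p i < 1) (hsum : ∑ i, p i = (k : ℝ))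
    (hp1 : 0 < p ⟨0, by omega⟩) :
    (1 - 2 * ∑ i ∈ univ.filter (fun i : Fin n => i.val < k), (1 - p i)) /
        (p ⟨0, by omega⟩ * (1 - p ⟨n - 1, by omega⟩)) ≤
      ∑ A ∈ powersetCard (k - 1)
          (univ.filter fun i : Fin n => 0 < i.val ∧ i.val < n - 1),
        (∏ i ∈ A, p i) *
          ∏ i ∈ (univ.filter fun i : Fin n => 0 < i.val ∧ i.val < n - 1) \ A, (1 - p i) := by
  have h0n : 0 < n := by omega
  have hn1 : n - 1 < n := by omega
  set i0 : Fin n := ⟨0, by omega⟩ with hi0def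
  set iN : Fin n := ⟨n - 1, by omega⟩ with hiNdef
  set mid : Finset (Fin n) := univ.filter fun i : Fin n => 0 < i.val ∧ i.val < n - 1 with hmiddef
  set w : Finset (Fin n) → ℝ := fun A => (∏ i ∈ A, p i) * ∏ i ∈ univ \ A, (1 - p i) with hwdef
  set s : ℝ := ∑ i ∈ univ.filter (fun i : Fin n => i.val < k), (1 - p i) with hsdef
  set T : ℝ := ∑ A ∈ powersetCard (k - 1) mid,
      (∏ i ∈ A, p i) * ∏ i ∈ mid \ A, (1 - p i) with hTdef
  have hi0N : i0 ≠ iN := by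
    simp only [hi0def, hiNdef, Ne, Fin.mk.injEq]
    omega
  have hw_nonneg : ∀ A : Finset (Fin n), 0 ≤ w A := by
    intro A
    apply mul_nonneg
    · exact Finset.prod_nonneg fun i _ => (hp i).1
    · exact Finset.prod_nonneg fun i _ => by linarith [(hp i).2]
  have hmid_mem : ∀ i : Fin n, i ∈ mid ↔ i ≠ i0 ∧ i ≠ iN := by
    intro i
    simp only [hmiddef, mem_filter, mem_univ, true_and, Ne, Fin.ext_iff, Fin.val_mk]
    have := i.isLt
    have hiNv : iN.val = n - 1 := rfl
    have hi0v : i0.val = 0 := rfl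
    omega
  -- card of the low set
  have hcard_low : (univ.filter fun i : Fin n => i.val < k).card = k := by
    have hklt : ∀ m ∈ Finset.range k, m < n := fun m hm => by
      have := Finset.mem_range.mp hm; omega
    have : (univ.filter fun i : Fin n => i.val < k) = (Finset.range k).attachFin hklt := by
      ext i
      simp [Finset.mem_attachFin]
    rw [this, Finset.card_attachFin, Finset.card_range]
  -- second expression for s
  have hs_high : ∑ i ∈ univ.filter (fun i : Fin n => ¬ i.val < k), p i = s := by
    have h1 := Finset.sum_filter_add_sum_filter_not (univ : Finset (Fin n))
      (fun i => i.val < k) p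
    rw [hsum] at h1
    have h2 : s = (k : ℝ) - ∑ i ∈ univ.filter (fun i : Fin n => i.val < k), p i := by
      rw [hsdef, Finset.sum_sub_distrib, Finset.sum_const, hcard_low, nsmul_eq_mul, mul_one]
    linarith
  -- the good event
  set good : Finset (Finset (Fin n)) :=
    (univ : Finset (Fin n)).powerset.filter (fun A => A.card = k ∧ i0 ∈ A ∧ iN ∉ A)
    with hgooddef
  -- good sum equals p i0 * (1 - p iN) * T
  have hgood_sum : ∑ A ∈ good, w A = p i0 * (1 - p iN) * T := by
    rw [hTdef, Finset.mul_sum]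
    refine Finset.sum_nbij' (fun A => A.erase i0) (fun B => insert i0 B) ?_ ?_ ?_ ?_ ?_
    · intro A hA
      rw [hgooddef, Finset.mem_filter, Finset.mem_powerset] at hA
      obtain ⟨-, hcard, hi0A, hiNA⟩ := hA
      rw [Finset.mem_powersetCard]
      constructor
      · intro x hx
        rw [Finset.mem_erase] at hx
        rw [hmid_mem]
        exact ⟨hx.1, fun h => hiNA (h ▸ hx.2)⟩
      · rw [Finset.card_erase_of_mem hi0A, hcard]
    · intro B hB
      rw [Finset.mem_powersetCard] at hB
      obtain ⟨hBsub, hBcard⟩ := hB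
      have hi0B : i0 ∉ B := fun h => ((hmid_mem i0).mp (hBsub h)).1 rfl
      rw [hgooddef, Finset.mem_filter, Finset.mem_powerset]
      refine ⟨Finset.subset_univ _, ?_, Finset.mem_insert_self _ _, ?_⟩
      · rw [Finset.card_insert_of_notMem hi0B, hBcard]; omega
      · intro h
        rcases Finset.mem_insert.mp h with h | h
        · exact hi0N h.symm
        · exact ((hmid_mem iN).mp (hBsub h)).2 rfl
    · intro A hA
      rw [hgooddef, Finset.mem_filter] at hA
      exact Finset.insert_erase hA.2.2.1
    · intro B hB
      rw [Finset.mem_powersetCard] at hB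
      have hi0B : i0 ∉ B := fun h => ((hmid_mem i0).mp (hB.1 h)).1 rfl
      exact Finset.erase_insert hi0B
    · intro A hA
      rw [hgooddef, Finset.mem_filter, Finset.mem_powerset] at hA
      obtain ⟨-, hcard, hi0A, hiNA⟩ := hA
      have hprod1 : ∏ i ∈ A, p i = p i0 * ∏ i ∈ A.erase i0, p i :=
        (Finset.mul_prod_erase A p hi0A).symm
      have hset : (univ : Finset (Fin n)) \ A = insert iN (mid \ A.erase i0) := by
        ext i
        rw [Finset.mem_insert, Finset.mem_sdiff, Finset.mem_sdiff, Finset.mem_erase,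
          hmid_mem]
        constructor
        · rintro ⟨-, hiA⟩
          by_cases hiN : i = iN
          · exact Or.inl hiN
          · refine Or.inr ⟨⟨fun h => hiA (h ▸ hi0A), hiN⟩, fun h => hiA h.2⟩
        · rintro (h | ⟨⟨hne0, _⟩, hnot⟩)
          · exact ⟨Finset.mem_univ _, h ▸ hiNA⟩
          · refine ⟨Finset.mem_univ _, fun h => hnot ⟨hne0, h⟩⟩
      have hiNnot : iN ∉ mid \ A.erase i0 := by
        rw [Finset.mem_sdiff, hmid_mem]
        rintro ⟨⟨-, h⟩, -⟩
        exact h rfl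
      rw [hwdef]
      simp only []
      rw [hprod1, hset, Finset.prod_insert hiNnot]
      ring
  -- total sum is 1
  have htotal : ∑ A ∈ (univ : Finset (Fin n)).powerset, w A = 1 := sum_w_eq_one p univ
  -- bad sum bound
  have hbad : ∑ A ∈ (univ : Finset (Fin n)).powerset.filter
      (fun A => ¬(A.card = k ∧ i0 ∈ A ∧ iN ∉ A)), w A ≤ 2 * s := by
    set R : Fin n → Finset (Fin n) → Prop :=
      fun i A => (i.val < k ∧ i ∉ A) ∨ (k ≤ i.val ∧ i ∈ A) with hRdef
    have hcover : ∀ A ∈ (univ : Finset (Fin n)).powerset.filter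
        (fun A => ¬(A.card = k ∧ i0 ∈ A ∧ iN ∉ A)), ∃ i ∈ (univ : Finset (Fin n)), R i A := by
      intro A hA
      rw [Finset.mem_filter] at hA
      by_cases hlow : ∀ i : Fin n, i.val < k → i ∈ A
      · by_cases hhigh : ∀ i : Fin n, k ≤ i.val → i ∉ A
        · exfalso
          apply hA.2
          have hsub1 : (univ.filter fun i : Fin n => i.val < k) ⊆ A := fun i hi =>
            hlow i (Finset.mem_filter.mp hi).2
          have hsub2 : A ⊆ (univ.filter fun i : Fin n => i.val < k) := fun i hi =>
            Finset.mem_filter.mpr ⟨Finset.mem_univ _, by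
              by_contra h
              exact hhigh i (le_of_not_gt h) hi⟩
          have hAeq : A = (univ.filter fun i : Fin n => i.val < k) :=
            Finset.Subset.antisymm hsub2 hsub1
          refine ⟨by rw [hAeq, hcard_low], hlow i0 (by simp [hi0def]; omega),
            hhigh iN (by simp [hiNdef]; omega)⟩
        · push_neg at hhigh
          obtain ⟨i, hik, hiA⟩ := hhigh
          exact ⟨i, Finset.mem_univ _, Or.inr ⟨hik, hiA⟩⟩
      · push_neg at hlow
        obtain ⟨i, hik, hiA⟩ := hlow
        exact ⟨i, Finset.mem_univ _, Or.inl ⟨hik, hiA⟩⟩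
    have h1 := sum_le_cover _ (univ : Finset (Fin n)) w
      (fun A _ => hw_nonneg A) R hcover
    have h2 : ∀ i : Fin n, ∑ A ∈ ((univ : Finset (Fin n)).powerset.filter
        (fun A => ¬(A.card = k ∧ i0 ∈ A ∧ iN ∉ A))).filter (fun A => R i A), w A
        ≤ if i.val < k then 1 - p i else p i := by
      intro i
      by_cases hik : i.val < k
      · rw [if_pos hik, ← sum_w_notMem p i]
        apply Finset.sum_le_sum_of_subset_of_nonneg
        · intro A hA
          simp only [Finset.mem_filter, hRdef] at hA ⊢
          obtain ⟨⟨hA1, -⟩, hR⟩ := hA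
          rcases hR with ⟨-, h⟩ | ⟨h, -⟩
          · exact ⟨hA1, h⟩
          · omega
        · intro A _ _
          exact hw_nonneg A
      · rw [if_neg hik, ← sum_w_mem p i]
        apply Finset.sum_le_sum_of_subset_of_nonneg
        · intro A hA
          simp only [Finset.mem_filter, hRdef] at hA ⊢
          obtain ⟨⟨hA1, -⟩, hR⟩ := hA
          rcases hR with ⟨h, -⟩ | ⟨-, h⟩
          · omega
          · exact ⟨hA1, h⟩
        · intro A _ _
          exact hw_nonneg A
    have h3 : ∑ i : Fin n, (if i.val < k then 1 - p i else p i) = 2 * s := by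
      rw [← Finset.sum_filter_add_sum_filter_not (univ : Finset (Fin n))
        (fun i => i.val < k)]
      have e1 : ∑ i ∈ univ.filter (fun i : Fin n => i.val < k),
          (if i.val < k then 1 - p i else p i) = s := by
        rw [hsdef]
        refine Finset.sum_congr rfl fun i hi => ?_
        rw [if_pos (Finset.mem_filter.mp hi).2]
      have e2 : ∑ i ∈ univ.filter (fun i : Fin n => ¬ i.val < k),
          (if i.val < k then 1 - p i else p i) = s := by
        rw [← hs_high]
        refine Finset.sum_congr rfl fun i hi => ?_
        rw [if_neg (Finset.mem_filter.mp hi).2]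
      rw [e1, e2]
      ring
    calc ∑ A ∈ (univ : Finset (Fin n)).powerset.filter
          (fun A => ¬(A.card = k ∧ i0 ∈ A ∧ iN ∉ A)), w A
        ≤ ∑ i : Fin n, ∑ A ∈ ((univ : Finset (Fin n)).powerset.filter
          (fun A => ¬(A.card = k ∧ i0 ∈ A ∧ iN ∉ A))).filter (fun A => R i A), w A := h1
      _ ≤ ∑ i : Fin n, (if i.val < k then 1 - p i else p i) :=
          Finset.sum_le_sum fun i _ => h2 i
      _ = 2 * s := h3
  -- combine
  have hsplit := Finset.sum_filter_add_sum_filter_not (univ : Finset (Fin n)).powerset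
    (fun A => A.card = k ∧ i0 ∈ A ∧ iN ∉ A) w
  rw [htotal] at hsplit
  have hkey : 1 - 2 * s ≤ p i0 * (1 - p iN) * T := by
    rw [← hgood_sum, hgooddef]
    linarith
  have hpos : 0 < p i0 * (1 - p iN) :=
    mul_pos hp1 (by linarith [(hp iN).2])
  rw [div_le_iff₀ hpos]
  linarith [hkey]
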